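/- Let 0 ≤ t_0 < s and let v be a trajectory of the consensus system defined on [t_0, s] such that G(u) satisfies Hypothesis 1 for all u ∈ [t_0, s]. Then (with D^+ denoting the upper right Dini derivative): D^+Δ_{U_1}(s) ≤ −Δ_{U_1}(s) + m·(Δ_N(t_0) − Δ_{U_1}(s)), and for every k ∈ {1,…,D−1}, D^+Δ_{U_{k+1}}(s) ≤ α_k·(Δ_{U_k}(s) − Δ_{U_{k+1}}(s)) + (m − α_k)·(Δ_N(t_0) − Δ_{U_{k+1}}(s)). -/

import Mathlib

open scoped Classical

/-- The pair `(SS_k, U_k)` of the hierarchical structure attached to the graph with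
adjacency `ta` and root `r`:
`SS_0 = {r}`, `U_k = ⋃_{l ≤ k} SS_l`, `SS_{k+1} = {i | ∃ j ∈ SS_k, ta i j = 1} \ U_k`. -/
noncomputable def hierSU {n : ℕ} (ta : Fin n → Fin n → ℝ) (r : Fin n) :
    ℕ → Finset (Fin n) × Finset (Fin n)
  | 0 => ({r}, {r})
  | k + 1 =>
      let p := hierSU ta r k
      let s := (Finset.univ.filter fun i => ∃ j ∈ p.1, ta i j = 1) \ p.2
      (s, p.2 ∪ s)

/-- `U_k`. -/
noncomputable def hierU {n : ℕ} (ta : Fin n → Fin n → ℝ) (r : Fin n) (k : ℕ) :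
    Finset (Fin n) :=
  (hierSU ta r k).2

/-- `α_k = min_{i ∈ U_{k+1}} ∑_{j ∈ U_k} ta i j`. -/
noncomputable def hierAlpha {n : ℕ} (ta : Fin n → Fin n → ℝ) (r : Fin n) (k : ℕ) : ℝ :=
  sInf ((fun i => ∑ j ∈ hierU ta r k, ta i j) '' ↑(hierU ta r (k + 1)))

/-- Hypothesis 1 (preservation of the hierarchical structure) for a graph with
adjacency `a`. -/
def HypOne {n : ℕ} (m D : ℕ) (ta : Fin n → Fin n → ℝ) (r : Fin n)
    (a : Fin n → Fin n → ℝ) : Prop :=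
  (∀ i ∈ hierU ta r 1, a i r = 1) ∧
  ∀ k : ℕ, 1 ≤ k → k ≤ D - 1 → ∀ i ∈ hierU ta r (k + 1),
    hierAlpha ta r k ≤ ∑ j ∈ hierU ta r k, a i j ∧
    ∑ j ∈ (hierU ta r k)ᶜ, a i j ≤ (m : ℝ) - hierAlpha ta r k

/-- Velocity diameter of the set `S` of agents. -/
noncomputable def sdiam {n d : ℕ} (S : Set (Fin n))
    (v : Fin n → EuclideanSpace ℝ (Fin d)) : ℝ :=
  sSup {x | ∃ i ∈ S, ∃ j ∈ S, x = ‖v i - v j‖}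

/-- Upper right Dini derivative. -/
noncomputable def diniUpper (f : ℝ → ℝ) (t : ℝ) : ℝ :=
  Filter.limsup (fun h : ℝ => (f (t + h) - f t) / h) (nhdsWithin 0 (Set.Ioi 0))

section AuxLemmas

open Filter Set
open scoped RealInnerProductSpace Topology

/-! ### Generic facts about `sdiam` -/

lemma sdiam_eq_sup' {n d : ℕ} (S : Finset (Fin n)) (hS : S.Nonempty)
    (v : Fin n → EuclideanSpace ℝ (Fin d)) :
    sdiam ↑S v = (S ×ˢ S).sup' (hS.product hS) (fun p => ‖v p.1 - v p.2‖) := by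
  rw [Finset.sup'_eq_csSup_image (S ×ˢ S) (hS.product hS) (fun p => ‖v p.1 - v p.2‖)]
  unfold sdiam
  congr 1
  ext x
  simp only [Set.mem_setOf_eq, Set.mem_image, Finset.mem_coe, Finset.mem_product]
  constructor
  · rintro ⟨i, hi, j, hj, rfl⟩; exact ⟨(i, j), ⟨hi, hj⟩, rfl⟩
  · rintro ⟨⟨i, j⟩, ⟨hi, hj⟩, rfl⟩; exact ⟨i, hi, j, hj, rfl⟩

lemma norm_le_sdiam {n d : ℕ} {S : Finset (Fin n)} {i j : Fin n} (hi : i ∈ S) (hj : j ∈ S)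
    (v : Fin n → EuclideanSpace ℝ (Fin d)) : ‖v i - v j‖ ≤ sdiam ↑S v := by
  rw [sdiam_eq_sup' S ⟨i, hi⟩ v]
  have hmem : (i, j) ∈ S ×ˢ S := Finset.mem_product.mpr ⟨hi, hj⟩
  exact Finset.le_sup' (fun p : Fin n × Fin n => ‖v p.1 - v p.2‖) hmem

lemma exists_sdiam_eq {n d : ℕ} (S : Finset (Fin n)) (hS : S.Nonempty)
    (v : Fin n → EuclideanSpace ℝ (Fin d)) :
    ∃ i ∈ S, ∃ j ∈ S, sdiam ↑S v = ‖v i - v j‖ := by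
  rw [sdiam_eq_sup' S hS v]
  obtain ⟨⟨i, j⟩, hp, h⟩ := Finset.exists_mem_eq_sup' (hS.product hS) (fun p => ‖v p.1 - v p.2‖)
  exact ⟨i, (Finset.mem_product.1 hp).1, j, (Finset.mem_product.1 hp).2, h⟩

lemma sdiam_le_sdiam {n d : ℕ} {S T : Finset (Fin n)} (hS : S.Nonempty) (hST : S ⊆ T)
    (v : Fin n → EuclideanSpace ℝ (Fin d)) : sdiam ↑S v ≤ sdiam ↑T v := by
  obtain ⟨i, hi, j, hj, h⟩ := exists_sdiam_eq S hS v
  rw [h]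
  exact norm_le_sdiam (hST hi) (hST hj) v

lemma inner_diff_le_sdiam {n d : ℕ} {e : EuclideanSpace ℝ (Fin d)} (he : ‖e‖ ≤ 1)
    (vv : Fin n → EuclideanSpace ℝ (Fin d)) {S : Finset (Fin n)} {l l' : Fin n}
    (hl : l ∈ S) (hl' : l' ∈ S) : ⟪e, vv l⟫ - ⟪e, vv l'⟫ ≤ sdiam ↑S vv := by
  have h1 : ⟪e, vv l⟫ - ⟪e, vv l'⟫ = ⟪e, vv l - vv l'⟫ := (inner_sub_right _ _ _).symm
  have h2 := real_inner_le_norm e (vv l - vv l')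
  have h3 := norm_le_sdiam hl hl' vv
  have h4 := norm_nonneg (vv l - vv l')
  nlinarith

/-! ### Continuity of finite suprema -/

lemma continuousAt_finset_sup' {ι : Type*} (P : Finset ι) (hP : P.Nonempty) (g : ι → ℝ → ℝ)
    (s : ℝ) (h : ∀ p ∈ P, ContinuousAt (g p) s) :
    ContinuousAt (fun u => P.sup' hP (fun p => g p u)) s := by
  induction hP using Finset.Nonempty.cons_induction with
  | singleton a => simpa using h a (Finset.mem_singleton_self a)
  | cons a t ha ht ih =>
      simp only [Finset.sup'_cons ht]
      exact (h a (Finset.mem_cons_self a t)).sup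
        (ih (fun p hp => h p (Finset.mem_cons_of_mem hp)))

/-! ### Upper bounds for slopes of finite suprema -/

lemma slope_sup'_bdd {ι : Type*} (P : Finset ι) (hP : P.Nonempty) (g : ι → ℝ → ℝ) (s : ℝ)
    (hbdd : ∀ p : ι, ∃ L : ℝ, ∀ᶠ h in 𝓝[>] (0 : ℝ), |g p (s + h) - g p s| ≤ L * h) :
    Filter.IsBoundedUnder (· ≤ ·) (𝓝[>] (0 : ℝ))
      (fun h => ((P.sup' hP fun p => g p (s + h)) - (P.sup' hP fun p => g p s)) / h) := by
  choose L hL using hbdd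
  apply Filter.isBoundedUnder_of_eventually_le (a := P.sup' hP L)
  have hall : ∀ᶠ h in 𝓝[>] (0 : ℝ), ∀ p ∈ P, |g p (s + h) - g p s| ≤ L p * h :=
    (Filter.eventually_all_finset _).2 fun p _ => hL p
  filter_upwards [hall, self_mem_nhdsWithin] with h h1 h2
  have h2' : (0 : ℝ) < h := h2
  rw [div_le_iff₀ h2']
  have hsup : (P.sup' hP fun p => g p (s + h)) ≤ (P.sup' hP fun p => g p s) + P.sup' hP L * h := by
    apply Finset.sup'_le
    intro p hp
    have hab := (abs_le.1 (h1 p hp)).2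
    have hgs : g p s ≤ P.sup' hP (fun p => g p s) := Finset.le_sup' (fun p => g p s) hp
    have hLp : L p ≤ P.sup' hP L := Finset.le_sup' _ hp
    nlinarith
  linarith

/-! ### Dini derivative of a finite supremum -/

lemma diniUpper_sup'_le {ι : Type*} (P : Finset ι) (hP : P.Nonempty) (g : ι → ℝ → ℝ)
    (s C : ℝ)
    (hcont : ∀ p ∈ P, ContinuousAt (g p) s)
    (hbdd : ∀ p : ι, ∃ L : ℝ, ∀ᶠ h in 𝓝[>] (0 : ℝ), |g p (s + h) - g p s| ≤ L * h)
    (hslope : ∀ p ∈ P, g p s = P.sup' hP (fun q => g q s) →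
      Filter.limsup (fun h : ℝ => (g p (s + h) - g p s) / h) (𝓝[>] (0 : ℝ)) ≤ C) :
    diniUpper (fun u => P.sup' hP (fun p => g p u)) s ≤ C := by
  set f : ℝ → ℝ := fun u => P.sup' hP (fun p => g p u) with hfdef
  have hpos : ∀ᶠ h in 𝓝[>] (0 : ℝ), (0 : ℝ) < h := self_mem_nhdsWithin
  obtain ⟨p₀, hp₀, hp₀eq⟩ := Finset.exists_mem_eq_sup' hP (fun q => g q s)
  obtain ⟨L₀, hL₀⟩ := hbdd p₀
  have hcob : ∀ᶠ h in 𝓝[>] (0 : ℝ), -L₀ ≤ (f (s + h) - f s) / h := by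
    filter_upwards [hL₀, hpos] with h hL hh
    have h1 : g p₀ (s + h) ≤ f (s + h) := Finset.le_sup' (fun p => g p (s + h)) hp₀
    have h2 : f s = g p₀ s := hp₀eq
    have h3 := (abs_le.1 hL).1
    rw [le_div_iff₀ hh]
    linarith
  have hmap : Filter.Tendsto (fun h : ℝ => s + h) (𝓝[>] (0 : ℝ)) (𝓝 s) := by
    have h0 : Filter.Tendsto (fun h : ℝ => s + h) (𝓝 (0 : ℝ)) (𝓝 s) := by
      simpa using (continuous_add_left _).tendsto (0 : ℝ)
    exact h0.mono_left nhdsWithin_le_nhds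
  have key : ∀ ε > 0, Filter.limsup (fun h : ℝ => (f (s + h) - f s) / h) (𝓝[>] (0 : ℝ)) ≤ C + ε := by
    intro ε hε
    have hev : ∀ p ∈ P, ∀ᶠ h in 𝓝[>] (0 : ℝ), g p (s + h) ≤ f s + h * (C + ε) := by
      intro p hp
      by_cases hpm : g p s = P.sup' hP (fun q => g q s)
      · obtain ⟨L, hL⟩ := hbdd p
        have hb : Filter.IsBoundedUnder (· ≤ ·) (𝓝[>] (0 : ℝ))
            (fun h => (g p (s + h) - g p s) / h) := by
          apply Filter.isBoundedUnder_of_eventually_le (a := L)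
          filter_upwards [hL, hpos] with h h1 h2
          rw [div_le_iff₀ h2]
          exact le_trans (le_abs_self _) h1
        have hlim := hslope p hp hpm
        have hev' : ∀ᶠ h in 𝓝[>] (0 : ℝ), (g p (s + h) - g p s) / h < C + ε :=
          Filter.eventually_lt_of_limsup_lt (lt_of_le_of_lt hlim (by linarith)) hb
        filter_upwards [hev', hpos] with h h1 h2
        have h3 := (div_lt_iff₀ h2).1 h1
        have hfs : g p s = f s := hpm
        nlinarith
      · have hlt : g p s < f s :=
          lt_of_le_of_ne (Finset.le_sup' (fun q => g q s) hp) hpm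
        set δ := f s - g p s with hδ
        have hδpos : 0 < δ := by simp only [hδ]; linarith
        have hc : Filter.Tendsto (fun h : ℝ => g p (s + h)) (𝓝[>] (0 : ℝ)) (𝓝 (g p s)) :=
          ((hcont p hp).tendsto).comp hmap
        have h1 : ∀ᶠ h in 𝓝[>] (0 : ℝ), dist (g p (s + h)) (g p s) < δ / 2 :=
          (Metric.tendsto_nhds.1 hc) (δ / 2) (half_pos hδpos)
        have hc2 : Filter.Tendsto (fun h : ℝ => h * (C + ε)) (𝓝[>] (0 : ℝ)) (𝓝 0) := by
          have h0 : Filter.Tendsto (fun h : ℝ => h * (C + ε)) (𝓝 (0 : ℝ)) (𝓝 0) := by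
            simpa using (continuous_mul_right (C + ε)).tendsto (0 : ℝ)
          exact h0.mono_left nhdsWithin_le_nhds
        have h2 : ∀ᶠ h in 𝓝[>] (0 : ℝ), dist (h * (C + ε)) 0 < δ / 2 :=
          (Metric.tendsto_nhds.1 hc2) (δ / 2) (half_pos hδpos)
        filter_upwards [h1, h2] with h h1' h2'
        rw [Real.dist_eq] at h1' h2'
        rw [sub_zero] at h2'
        have ha := (abs_lt.1 h1').2
        have hb := (abs_lt.1 h2').1
        have : δ = f s - g p s := hδ
        linarith
    have hall : ∀ᶠ h in 𝓝[>] (0 : ℝ), ∀ p ∈ P, g p (s + h) ≤ f s + h * (C + ε) :=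
      (Filter.eventually_all_finset _).2 hev
    have hev2 : ∀ᶠ h in 𝓝[>] (0 : ℝ), (f (s + h) - f s) / h ≤ C + ε := by
      filter_upwards [hall, hpos] with h h1 h2
      have hs : f (s + h) ≤ f s + h * (C + ε) := Finset.sup'_le _ _ (fun p hp => h1 p hp)
      rw [div_le_iff₀ h2]
      linarith
    exact Filter.limsup_le_of_le
      (Filter.isCoboundedUnder_le_of_eventually_le _ hcob) hev2
  have hdini : diniUpper f s =
      Filter.limsup (fun h : ℝ => (f (s + h) - f s) / h) (𝓝[>] (0 : ℝ)) := rfl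
  rw [hdini]
  refine le_of_forall_pos_le_add fun ε hε => key ε hε

/-! ### Slopes of norms of differentiable curves -/

lemma tendsto_slope_norm_of_ne_zero {E : Type*} [NormedAddCommGroup E] [InnerProductSpace ℝ E]
    (w : ℝ → E) (w' : E) (s : ℝ) (hw : HasDerivAt w w' s) (h0 : w s ≠ 0) :
    Filter.Tendsto (fun h : ℝ => (‖w (s + h)‖ - ‖w s‖) / h) (𝓝[>] (0 : ℝ))
      (𝓝 (⟪w s, w'⟫ / ‖w s‖)) := by
  have hq : HasDerivAt (fun u => ⟪w u, w u⟫) (⟪w s, w'⟫ + ⟪w', w s⟫) s :=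
    hw.inner ℝ hw
  have hqs : ⟪w s, w s⟫ ≠ 0 := by
    rw [real_inner_self_eq_norm_mul_norm]
    exact mul_ne_zero (norm_ne_zero_iff.2 h0) (norm_ne_zero_iff.2 h0)
  have hsq := (Real.hasDerivAt_sqrt hqs).comp s hq
  simp only [Function.comp_def] at hsq
  have heq : (fun u => Real.sqrt ⟪w u, w u⟫) = fun u => ‖w u‖ := by
    funext u
    rw [real_inner_self_eq_norm_mul_norm, Real.sqrt_mul_self (norm_nonneg _)]
  rw [heq] at hsq
  have hval : 1 / (2 * Real.sqrt ⟪w s, w s⟫) * (⟪w s, w'⟫ + ⟪w', w s⟫)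
      = ⟪w s, w'⟫ / ‖w s‖ := by
    rw [real_inner_self_eq_norm_mul_norm, Real.sqrt_mul_self (norm_nonneg _),
      real_inner_comm w' (w s)]
    have hn : ‖w s‖ ≠ 0 := norm_ne_zero_iff.2 h0
    field_simp
    ring
  rw [hval] at hsq
  have ht := hsq.tendsto_slope_zero_right
  refine ht.congr ?_
  intro h
  simp [smul_eq_mul, div_eq_inv_mul]

lemma tendsto_slope_norm_of_eq_zero {E : Type*} [NormedAddCommGroup E] [InnerProductSpace ℝ E]
    (w : ℝ → E) (w' : E) (s : ℝ) (hw : HasDerivAt w w' s) (h0 : w s = 0) :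
    Filter.Tendsto (fun h : ℝ => (‖w (s + h)‖ - ‖w s‖) / h) (𝓝[>] (0 : ℝ)) (𝓝 ‖w'‖) := by
  have ht := hw.tendsto_slope_zero_right
  have hn : Filter.Tendsto (fun t : ℝ => ‖t⁻¹ • (w (s + t) - w s)‖) (𝓝[>] (0 : ℝ)) (𝓝 ‖w'‖) :=
    (continuous_norm.tendsto _).comp ht
  refine hn.congr' ?_
  filter_upwards [self_mem_nhdsWithin] with t ht'
  have htpos : (0 : ℝ) < t := ht'
  rw [h0]
  rw [norm_smul, norm_inv, Real.norm_eq_abs, abs_of_pos htpos]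
  rw [sub_zero, norm_zero, sub_zero, div_eq_inv_mul]

lemma slope_norm_bdd {E : Type*} [NormedAddCommGroup E] [InnerProductSpace ℝ E]
    (w : ℝ → E) (w' : E) (s : ℝ) (hw : HasDerivAt w w' s) :
    ∃ L : ℝ, ∀ᶠ h in 𝓝[>] (0 : ℝ), |‖w (s + h)‖ - ‖w s‖| ≤ L * h := by
  refine ⟨‖w'‖ + 1, ?_⟩
  have ht := hw.tendsto_slope_zero_right
  have hn : Filter.Tendsto (fun t : ℝ => ‖t⁻¹ • (w (s + t) - w s)‖) (𝓝[>] (0 : ℝ)) (𝓝 ‖w'‖) :=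
    (continuous_norm.tendsto _).comp ht
  have hev : ∀ᶠ t in 𝓝[>] (0 : ℝ), ‖t⁻¹ • (w (s + t) - w s)‖ < ‖w'‖ + 1 :=
    hn.eventually (gt_mem_nhds (lt_add_one _))
  filter_upwards [hev, self_mem_nhdsWithin] with t h1 h2
  have htpos : (0 : ℝ) < t := h2
  have hab : |‖w (s + t)‖ - ‖w s‖| ≤ ‖w (s + t) - w s‖ := abs_norm_sub_norm_le _ _
  have h3 : ‖w (s + t) - w s‖ = t * ‖t⁻¹ • (w (s + t) - w s)‖ := by
    rw [norm_smul, norm_inv, Real.norm_eq_abs, abs_of_pos htpos]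
    field_simp
  rw [h3] at hab
  nlinarith

/-! ### Elementary summation estimates -/

lemma sum_mul_le_nonpos {n : ℕ} {T : Finset (Fin n)} (b x : Fin n → ℝ) (M β : ℝ)
    (hb : ∀ l ∈ T, 0 ≤ b l) (hx : ∀ l ∈ T, x l ≤ M) (hM : M ≤ 0)
    (hβ : β ≤ ∑ l ∈ T, b l) :
    ∑ l ∈ T, b l * x l ≤ β * M := by
  calc ∑ l ∈ T, b l * x l ≤ ∑ l ∈ T, b l * M :=
        Finset.sum_le_sum (fun l hl => mul_le_mul_of_nonneg_left (hx l hl) (hb l hl))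
    _ = (∑ l ∈ T, b l) * M := by rw [Finset.sum_mul]
    _ ≤ β * M := mul_le_mul_of_nonpos_right hβ hM

lemma sum_mul_le_nonneg {n : ℕ} {T : Finset (Fin n)} (b x : Fin n → ℝ) (M β : ℝ)
    (hb : ∀ l ∈ T, 0 ≤ b l) (hx : ∀ l ∈ T, x l ≤ M) (hM : 0 ≤ M)
    (hβ : ∑ l ∈ T, b l ≤ β) :
    ∑ l ∈ T, b l * x l ≤ β * M := by
  calc ∑ l ∈ T, b l * x l ≤ ∑ l ∈ T, b l * M :=
        Finset.sum_le_sum (fun l hl => mul_le_mul_of_nonneg_left (hx l hl) (hb l hl))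
    _ = (∑ l ∈ T, b l) * M := by rw [Finset.sum_mul]
    _ ≤ β * M := mul_le_mul_of_nonneg_right hβ hM

lemma pair_sum_le {n : ℕ} (T : Finset (Fin n)) (b c x : Fin n → ℝ) (i j : Fin n) (β K : ℝ)
    (hb : ∀ l ∈ T, 0 ≤ b l) (hc : ∀ l ∈ T, 0 ≤ c l)
    (hβb : ∑ l ∈ T, b l ≤ β) (hβc : ∑ l ∈ T, c l ≤ β) (hβ : 0 ≤ β)
    (hK : ∀ l l', x l - x l' ≤ K) :
    ∑ l ∈ T, b l * (x l - x i) + ∑ l ∈ T, c l * (x j - x l) ≤ β * (K - (x i - x j)) := by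
  have hne1 : (insert i T).Nonempty := Finset.insert_nonempty _ _
  have hne2 : (insert j T).Nonempty := Finset.insert_nonempty _ _
  set M3 := (insert i T).sup' hne1 (fun l => x l - x i) with hM3def
  set M4 := (insert j T).sup' hne2 (fun l => x j - x l) with hM4def
  have hM3 : 0 ≤ M3 := by
    have h := Finset.le_sup' (fun l => x l - x i) (Finset.mem_insert_self i T)
    rw [← hM3def] at h
    simp only [sub_self] at h
    linarith
  have hM4 : 0 ≤ M4 := by
    have h := Finset.le_sup' (fun l => x j - x l) (Finset.mem_insert_self j T)
    rw [← hM4def] at h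
    simp only [sub_self] at h
    linarith
  have h34 : M3 + M4 ≤ K - (x i - x j) := by
    obtain ⟨l1, _, e1⟩ := Finset.exists_mem_eq_sup' hne1 (fun l => x l - x i)
    obtain ⟨l2, _, e2⟩ := Finset.exists_mem_eq_sup' hne2 (fun l => x j - x l)
    have := hK l1 l2
    rw [hM3def, hM4def, e1, e2]
    linarith
  have h1 : ∑ l ∈ T, b l * (x l - x i) ≤ β * M3 :=
    sum_mul_le_nonneg b _ M3 β hb
      (fun l hl => Finset.le_sup' (fun l => x l - x i) (Finset.mem_insert_of_mem hl)) hM3 hβb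
  have h2 : ∑ l ∈ T, c l * (x j - x l) ≤ β * M4 :=
    sum_mul_le_nonneg c _ M4 β hc
      (fun l hl => Finset.le_sup' (fun l => x j - x l) (Finset.mem_insert_of_mem hl)) hM4 hβc
  have hmul := mul_le_mul_of_nonneg_left h34 hβ
  nlinarith

lemma pair_sum_le_nonpos {n : ℕ} (T : Finset (Fin n)) (hT : T.Nonempty)
    (b c x : Fin n → ℝ) (i j : Fin n) (β K : ℝ)
    (hb : ∀ l ∈ T, 0 ≤ b l) (hc : ∀ l ∈ T, 0 ≤ c l)
    (hβb : β ≤ ∑ l ∈ T, b l) (hβc : β ≤ ∑ l ∈ T, c l) (hβ : 0 ≤ β)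
    (hxi : ∀ l ∈ T, x l ≤ x i) (hxj : ∀ l ∈ T, x j ≤ x l)
    (hK : ∀ l ∈ T, ∀ l' ∈ T, x l - x l' ≤ K) :
    ∑ l ∈ T, b l * (x l - x i) + ∑ l ∈ T, c l * (x j - x l) ≤ β * (K - (x i - x j)) := by
  set M1 := T.sup' hT (fun l => x l - x i) with hM1def
  set M2 := T.sup' hT (fun l => x j - x l) with hM2def
  have hM1 : M1 ≤ 0 := Finset.sup'_le _ _ (fun l hl => by have := hxi l hl; linarith)
  have hM2 : M2 ≤ 0 := Finset.sup'_le _ _ (fun l hl => by have := hxj l hl; linarith)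
  have h34 : M1 + M2 ≤ K - (x i - x j) := by
    obtain ⟨l1, hl1, e1⟩ := Finset.exists_mem_eq_sup' hT (fun l => x l - x i)
    obtain ⟨l2, hl2, e2⟩ := Finset.exists_mem_eq_sup' hT (fun l => x j - x l)
    have := hK l1 hl1 l2 hl2
    rw [hM1def, hM2def, e1, e2]
    linarith
  have h1 : ∑ l ∈ T, b l * (x l - x i) ≤ β * M1 :=
    sum_mul_le_nonpos b _ M1 β hb (fun l hl => Finset.le_sup' (fun l => x l - x i) hl) hM1 hβb
  have h2 : ∑ l ∈ T, c l * (x j - x l) ≤ β * M2 :=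
    sum_mul_le_nonpos c _ M2 β hc (fun l hl => Finset.le_sup' (fun l => x j - x l) hl) hM2 hβc
  have hmul := mul_le_mul_of_nonneg_left h34 hβ
  nlinarith

/-! ### Expanding the inner product of a consensus derivative -/

lemma inner_deriv_expand {n d : ℕ} (e : EuclideanSpace ℝ (Fin d))
    (vv : Fin n → EuclideanSpace ℝ (Fin d)) (b c : Fin n → ℝ) (i j : Fin n) :
    ⟪e, (∑ l, b l • (vv l - vv i)) - (∑ l, c l • (vv l - vv j))⟫
      = ∑ l, b l * (⟪e, vv l⟫ - ⟪e, vv i⟫) + ∑ l, c l * (⟪e, vv j⟫ - ⟪e, vv l⟫) := by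
  simp only [inner_sub_right, inner_sum, real_inner_smul_right]
  rw [sub_eq_add_neg, ← Finset.sum_neg_distrib]
  congr 1
  apply Finset.sum_congr rfl
  intro l _
  ring

/-! ### The main Dini-derivative bound for a diameter -/

lemma diniUpper_sdiam_le {n d : ℕ} (v : ℝ → Fin n → EuclideanSpace ℝ (Fin d))
    (v' : Fin n → EuclideanSpace ℝ (Fin d)) (s : ℝ)
    (hv : ∀ i, HasDerivAt (fun u => v u i) (v' i) s)
    (W : Finset (Fin n)) (hW : W.Nonempty) (C : ℝ)
    (hC : ∀ i ∈ W, ∀ j ∈ W, ‖v s i - v s j‖ = sdiam ↑W (v s) →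
      ∀ e : EuclideanSpace ℝ (Fin d), ‖e‖ ≤ 1 → ⟪e, v s i - v s j⟫ = sdiam ↑W (v s) →
      ⟪e, v' i - v' j⟫ ≤ C) :
    diniUpper (fun u => sdiam ↑W (v u)) s ≤ C := by
  have hfun : (fun u => sdiam ↑W (v u))
      = fun u => (W ×ˢ W).sup' (hW.product hW) (fun p => ‖v u p.1 - v u p.2‖) :=
    funext fun u => sdiam_eq_sup' W hW (v u)
  rw [hfun]
  refine diniUpper_sup'_le (W ×ˢ W) (hW.product hW)
    (fun p u => ‖v u p.1 - v u p.2‖) s C ?_ ?_ ?_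
  · intro p _
    exact ((hv p.1).continuousAt.sub (hv p.2).continuousAt).norm
  · intro p
    exact slope_norm_bdd (fun u => v u p.1 - v u p.2) (v' p.1 - v' p.2) s
      ((hv p.1).sub (hv p.2))
  · intro p hp hpm
    have hp1 : p.1 ∈ W := (Finset.mem_product.1 hp).1
    have hp2 : p.2 ∈ W := (Finset.mem_product.1 hp).2
    have hw : HasDerivAt (fun u => v u p.1 - v u p.2) (v' p.1 - v' p.2) s :=
      (hv p.1).sub (hv p.2)
    have hps : ‖v s p.1 - v s p.2‖ = sdiam ↑W (v s) := by
      rw [sdiam_eq_sup' W hW (v s)]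
      exact hpm
    show Filter.limsup
      (fun h : ℝ => (‖v (s + h) p.1 - v (s + h) p.2‖ - ‖v s p.1 - v s p.2‖) / h)
      (𝓝[>] (0 : ℝ)) ≤ C
    by_cases h0 : v s p.1 - v s p.2 = 0
    · have hlim := (tendsto_slope_norm_of_eq_zero (fun u => v u p.1 - v u p.2)
        (v' p.1 - v' p.2) s hw h0).limsup_eq
      rw [hlim]
      have hsd0 : sdiam ↑W (v s) = 0 := by rw [← hps, h0, norm_zero]
      by_cases h0' : v' p.1 - v' p.2 = 0
      · have := hC p.1 hp1 p.2 hp2 hps 0 (by simp) (by simp [hsd0])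
        simpa [h0'] using this
      · set e := ‖v' p.1 - v' p.2‖⁻¹ • (v' p.1 - v' p.2) with hedef
        have hnn : ‖v' p.1 - v' p.2‖ ≠ 0 := norm_ne_zero_iff.2 h0'
        have he1 : ‖e‖ ≤ 1 := by
          rw [hedef, norm_smul, norm_inv, norm_norm, inv_mul_cancel₀ hnn]
        have heD : ⟪e, v s p.1 - v s p.2⟫ = sdiam ↑W (v s) := by
          rw [hsd0, h0, inner_zero_right]
        have hfin := hC p.1 hp1 p.2 hp2 hps e he1 heD
        have hee : ⟪e, v' p.1 - v' p.2⟫ = ‖v' p.1 - v' p.2‖ := by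
          rw [hedef, real_inner_smul_left, real_inner_self_eq_norm_mul_norm]
          field_simp
        rw [hee] at hfin
        exact hfin
    · have hlim := (tendsto_slope_norm_of_ne_zero (fun u => v u p.1 - v u p.2)
        (v' p.1 - v' p.2) s hw h0).limsup_eq
      rw [hlim]
      set e := ‖v s p.1 - v s p.2‖⁻¹ • (v s p.1 - v s p.2) with hedef
      have hnn : ‖v s p.1 - v s p.2‖ ≠ 0 := norm_ne_zero_iff.2 h0
      have he1 : ‖e‖ ≤ 1 := by
        rw [hedef, norm_smul, norm_inv, norm_norm, inv_mul_cancel₀ hnn]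
      have heD : ⟪e, v s p.1 - v s p.2⟫ = sdiam ↑W (v s) := by
        rw [hedef, real_inner_smul_left, real_inner_self_eq_norm_mul_norm, ← hps]
        field_simp
      have hfin := hC p.1 hp1 p.2 hp2 hps e he1 heD
      have hee : ⟪e, v' p.1 - v' p.2⟫
          = ⟪v s p.1 - v s p.2, v' p.1 - v' p.2⟫ / ‖v s p.1 - v s p.2‖ := by
        rw [hedef, real_inner_smul_left, div_eq_inv_mul]
      rw [hee] at hfin
      exact hfin

/-! ### Facts about the hierarchical structure -/

lemma hierU_succ {n : ℕ} (ta : Fin n → Fin n → ℝ) (r : Fin n) (k : ℕ) :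
    hierU ta r k ⊆ hierU ta r (k + 1) := by
  intro i hi
  unfold hierU hierSU
  exact Finset.mem_union_left _ hi

lemma root_mem_hierU {n : ℕ} (ta : Fin n → Fin n → ℝ) (r : Fin n) (k : ℕ) :
    r ∈ hierU ta r k := by
  induction k with
  | zero => simp [hierU, hierSU]
  | succ k ih => exact hierU_succ ta r k ih

lemma hierAlpha_nonneg {n : ℕ} (ta : Fin n → Fin n → ℝ)
    (hta : ∀ i j, ta i j = 0 ∨ ta i j = 1) (r : Fin n) (k : ℕ) :
    0 ≤ hierAlpha ta r k := by
  apply Real.sInf_nonneg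
  rintro x ⟨i, _, rfl⟩
  exact Finset.sum_nonneg fun j _ => by rcases hta i j with h | h <;> simp [h]

end AuxLemmas

set_option maxHeartbeats 1000000 in
open Filter Set in
open scoped RealInnerProductSpace Topology in
/-- Lemma 10: under preservation of the hierarchical structure (Hypothesis 1) on
`[t₀, s]`, the Dini derivatives of the diameters satisfy
`D⁺Δ_{U_1}(s) ≤ -Δ_{U_1}(s) + m (Δ_N(t₀) - Δ_{U_1}(s))` and, for `k ∈ {1, …, D-1}`,
`D⁺Δ_{U_{k+1}}(s) ≤ α_k (Δ_{U_k}(s) - Δ_{U_{k+1}}(s))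
                      + (m - α_k)(Δ_N(t₀) - Δ_{U_{k+1}}(s))`. -/
theorem stmt8 {n d : ℕ} (m D : ℕ) (hm : 1 ≤ m)
    (ta : Fin n → Fin n → ℝ) (hta : ∀ i j, ta i j = 0 ∨ ta i j = 1)
    (r : Fin n)
    (hspan : hierU ta r D = Finset.univ)
    (hdepth : ∀ k < D, hierU ta r k ≠ Finset.univ)
    (a : ℝ → Fin n → Fin n → ℝ)
    (ha01 : ∀ t i j, a t i j = 0 ∨ a t i j = 1)
    (hreg : ∀ t i, ∑ j, a t i j = (m : ℝ))
    (v : ℝ → Fin n → EuclideanSpace ℝ (Fin d))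
    (t0 s : ℝ) (ht0 : 0 ≤ t0) (hts : t0 < s)
    (htraj : ∀ i : Fin n, ∀ u ∈ Set.Icc t0 s,
      HasDerivAt (fun w => v w i) (∑ j, a u i j • (v u j - v u i)) u)
    (hhyp : ∀ u ∈ Set.Icc t0 s, HypOne m D ta r (a u)) :
    diniUpper (fun u => sdiam ↑(hierU ta r 1) (v u)) s ≤
      -sdiam ↑(hierU ta r 1) (v s) +
        (m : ℝ) * (sdiam Set.univ (v t0) - sdiam ↑(hierU ta r 1) (v s)) ∧
    ∀ k : ℕ, 1 ≤ k → k ≤ D - 1 →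
      diniUpper (fun u => sdiam ↑(hierU ta r (k + 1)) (v u)) s ≤
        hierAlpha ta r k *
            (sdiam ↑(hierU ta r k) (v s) - sdiam ↑(hierU ta r (k + 1)) (v s)) +
          ((m : ℝ) - hierAlpha ta r k) *
            (sdiam Set.univ (v t0) - sdiam ↑(hierU ta r (k + 1)) (v s)) := by
  have hsmem : s ∈ Set.Icc t0 s := ⟨hts.le, le_refl s⟩
  have ha_nonneg : ∀ t i j, 0 ≤ a t i j := fun t i j => by
    rcases ha01 t i j with h | h <;> simp [h]
  have hNne : (Finset.univ : Finset (Fin n)).Nonempty := ⟨r, Finset.mem_univ r⟩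
  have hm' : (1 : ℝ) ≤ (m : ℝ) := by exact_mod_cast hm
  -- the global diameter has nonpositive Dini derivative everywhere on [t0, s]
  have hdini0 : ∀ x ∈ Set.Icc t0 s,
      diniUpper (fun u => sdiam ↑(Finset.univ : Finset (Fin n)) (v u)) x ≤ 0 := by
    intro x hx
    refine diniUpper_sdiam_le v (fun i => ∑ j, a x i j • (v x j - v x i)) x
      (fun i => htraj i x hx) Finset.univ hNne 0 ?_
    intro i _ j _ _ e he1 heD
    beta_reduce
    rw [inner_deriv_expand e (v x) (a x i) (a x j) i j]
    have hps := pair_sum_le Finset.univ (a x i) (a x j) (fun l => ⟪e, v x l⟫) i j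
      (m : ℝ) (sdiam ↑(Finset.univ : Finset (Fin n)) (v x))
      (fun l _ => ha_nonneg x i l) (fun l _ => ha_nonneg x j l)
      (le_of_eq (hreg x i)) (le_of_eq (hreg x j)) (by positivity)
      (fun l l' => inner_diff_le_sdiam he1 (v x) (Finset.mem_univ l) (Finset.mem_univ l'))
    beta_reduce at hps
    have hxij : ⟪e, v x i⟫ - ⟪e, v x j⟫ = sdiam ↑(Finset.univ : Finset (Fin n)) (v x) := by
      rw [← inner_sub_right]; exact heD
    nlinarith [hps, hxij]
  -- continuity of the global diameter
  have hcontF : ∀ x ∈ Set.Icc t0 s,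
      ContinuousAt (fun u => sdiam ↑(Finset.univ : Finset (Fin n)) (v u)) x := by
    intro x hx
    have heqF : (fun u => sdiam ↑(Finset.univ : Finset (Fin n)) (v u))
        = fun u => (Finset.univ ×ˢ Finset.univ : Finset (Fin n × Fin n)).sup'
            (hNne.product hNne) (fun p => ‖v u p.1 - v u p.2‖) :=
      funext fun u => sdiam_eq_sup' _ hNne (v u)
    rw [heqF]
    exact continuousAt_finset_sup' _ _ _ x
      (fun p _ => (((htraj p.1 x hx).continuousAt).sub ((htraj p.2 x hx).continuousAt)).norm)
  -- the global diameter is nonincreasing on [t0, s]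
  have hmono : sdiam ↑(Finset.univ : Finset (Fin n)) (v s)
      ≤ sdiam ↑(Finset.univ : Finset (Fin n)) (v t0) := by
    set F := fun u => sdiam ↑(Finset.univ : Finset (Fin n)) (v u) with hFdef
    have heqF : F = fun u => (Finset.univ ×ˢ Finset.univ : Finset (Fin n × Fin n)).sup'
        (hNne.product hNne) (fun p => ‖v u p.1 - v u p.2‖) :=
      funext fun u => sdiam_eq_sup' _ hNne (v u)
    have hslopeF : ∀ x ∈ Set.Ico t0 s, ∀ rr : ℝ, (0 : ℝ) < rr →
        ∃ᶠ z in 𝓝[>] x, slope F x z < rr := by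
      intro x hx rr hrr
      by_contra hcon
      rw [Filter.not_frequently] at hcon
      have hcon' : ∀ᶠ z in 𝓝[>] x, rr ≤ slope F x z := hcon.mono fun z hz => not_lt.1 hz
      have hmapx : Filter.Tendsto (fun h : ℝ => x + h) (𝓝[>] (0 : ℝ)) (𝓝[>] x) := by
        rw [tendsto_nhdsWithin_iff]
        constructor
        · have h0 : Filter.Tendsto (fun h : ℝ => x + h) (𝓝 (0 : ℝ)) (𝓝 x) := by
            simpa using (continuous_add_left _).tendsto (0 : ℝ)
          exact h0.mono_left nhdsWithin_le_nhds
        · filter_upwards [self_mem_nhdsWithin] with h hh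
          exact lt_add_of_pos_right x hh
      have hev := hmapx.eventually hcon'
      have hev2 : ∀ᶠ h in 𝓝[>] (0 : ℝ), rr ≤ (F (x + h) - F x) / h := by
        filter_upwards [hev, self_mem_nhdsWithin] with h h1 _
        rwa [slope_def_field, add_sub_cancel_left] at h1
      have hbddx : Filter.IsBoundedUnder (· ≤ ·) (𝓝[>] (0 : ℝ))
          (fun h => (F (x + h) - F x) / h) := by
        rw [heqF]
        exact slope_sup'_bdd (Finset.univ ×ˢ Finset.univ) (hNne.product hNne)
          (fun p u => ‖v u p.1 - v u p.2‖) x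
          (fun p => slope_norm_bdd (fun u => v u p.1 - v u p.2) _ x
            ((htraj p.1 x (Set.Ico_subset_Icc_self hx)).sub
              (htraj p.2 x (Set.Ico_subset_Icc_self hx))))
      have hle : rr ≤ Filter.limsup (fun h : ℝ => (F (x + h) - F x) / h) (𝓝[>] (0 : ℝ)) :=
        Filter.le_limsup_of_frequently_le hev2.frequently hbddx
      have hd : diniUpper F x ≤ 0 := hdini0 x (Set.Ico_subset_Icc_self hx)
      have hdd : diniUpper F x
          = Filter.limsup (fun h : ℝ => (F (x + h) - F x) / h) (𝓝[>] (0 : ℝ)) := rfl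
      rw [hdd] at hd
      linarith
    have key : ∀ ε : ℝ, 0 < ε → F s ≤ F t0 + ε * (s - t0) := by
      intro ε hε
      have hfb := image_le_of_liminf_slope_right_lt_deriv_boundary
        (f := F) (f' := fun _ => (0 : ℝ)) (a := t0) (b := s)
        (B := fun u => F t0 + ε * (u - t0)) (B' := fun _ => ε)
        (fun x hx => (hcontF x hx).continuousWithinAt)
        (fun x hx rr hrr => hslopeF x hx rr hrr)
        (by simp)
        (fun x => by
          simpa using (((hasDerivAt_id x).sub_const t0).const_mul ε).const_add (F t0))
        (fun x _ _ => hε)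
      exact hfb (Set.right_mem_Icc.2 hts.le)
    refine le_of_forall_pos_le_add fun ε' hε' => ?_
    have hst : (0 : ℝ) < s - t0 := by linarith
    have hkey := key (ε' / (s - t0)) (div_pos hε' hst)
    have heq : ε' / (s - t0) * (s - t0) = ε' := div_mul_cancel₀ _ (ne_of_gt hst)
    linarith
  have hcoe0 : sdiam (Set.univ) (v t0) = sdiam ↑(Finset.univ : Finset (Fin n)) (v t0) := by
    rw [Finset.coe_univ]
  constructor
  · -- the U₁ estimate
    have hW1ne : (hierU ta r 1).Nonempty := ⟨r, root_mem_hierU ta r 1⟩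
    refine diniUpper_sdiam_le v (fun i => ∑ j, a s i j • (v s j - v s i)) s
      (fun i => htraj i s hsmem) (hierU ta r 1) hW1ne _ ?_
    intro i hi j hj _ e he1 heD
    beta_reduce
    rw [inner_deriv_expand e (v s) (a s i) (a s j) i j]
    have hbr : a s i r = 1 := (hhyp s hsmem).1 i hi
    have hcr : a s j r = 1 := (hhyp s hsmem).1 j hj
    have hsplit1 : ∑ l, a s i l * (⟪e, v s l⟫ - ⟪e, v s i⟫)
        = a s i r * (⟪e, v s r⟫ - ⟪e, v s i⟫)
          + ∑ l ∈ Finset.univ.erase r, a s i l * (⟪e, v s l⟫ - ⟪e, v s i⟫) :=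
      (Finset.add_sum_erase _ _ (Finset.mem_univ r)).symm
    have hsplit2 : ∑ l, a s j l * (⟪e, v s j⟫ - ⟪e, v s l⟫)
        = a s j r * (⟪e, v s j⟫ - ⟪e, v s r⟫)
          + ∑ l ∈ Finset.univ.erase r, a s j l * (⟪e, v s j⟫ - ⟪e, v s l⟫) :=
      (Finset.add_sum_erase _ _ (Finset.mem_univ r)).symm
    rw [hsplit1, hsplit2, hbr, hcr]
    have hsum1 : ∑ l ∈ Finset.univ.erase r, a s i l = (m : ℝ) - 1 := by
      have h1 := Finset.add_sum_erase Finset.univ (a s i) (Finset.mem_univ r)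
      rw [hbr] at h1
      have h2 := hreg s i
      linarith
    have hsum2 : ∑ l ∈ Finset.univ.erase r, a s j l = (m : ℝ) - 1 := by
      have h1 := Finset.add_sum_erase Finset.univ (a s j) (Finset.mem_univ r)
      rw [hcr] at h1
      have h2 := hreg s j
      linarith
    have hps := pair_sum_le (Finset.univ.erase r) (a s i) (a s j)
      (fun l => ⟪e, v s l⟫) i j ((m : ℝ) - 1)
      (sdiam ↑(Finset.univ : Finset (Fin n)) (v s))
      (fun l _ => ha_nonneg s i l) (fun l _ => ha_nonneg s j l)
      (le_of_eq hsum1) (le_of_eq hsum2) (by linarith)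
      (fun l l' => inner_diff_le_sdiam he1 (v s) (Finset.mem_univ l) (Finset.mem_univ l'))
    beta_reduce at hps
    have hxij : ⟪e, v s i⟫ - ⟪e, v s j⟫ = sdiam ↑(hierU ta r 1) (v s) := by
      rw [← inner_sub_right]; exact heD
    have hΔ1N : sdiam ↑(hierU ta r 1) (v s) ≤ sdiam ↑(Finset.univ : Finset (Fin n)) (v s) :=
      sdiam_le_sdiam hW1ne (Finset.subset_univ _) (v s)
    have e2 : ((m : ℝ) - 1) * (sdiam ↑(Finset.univ : Finset (Fin n)) (v s)
          - sdiam ↑(hierU ta r 1) (v s))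
        ≤ ((m : ℝ) - 1) * (sdiam ↑(Finset.univ : Finset (Fin n)) (v t0)
          - sdiam ↑(hierU ta r 1) (v s)) :=
      mul_le_mul_of_nonneg_left (by linarith) (by linarith)
    have e3 : ((m : ℝ) - 1) * (sdiam ↑(Finset.univ : Finset (Fin n)) (v t0)
          - sdiam ↑(hierU ta r 1) (v s))
        ≤ (m : ℝ) * (sdiam ↑(Finset.univ : Finset (Fin n)) (v t0)
          - sdiam ↑(hierU ta r 1) (v s)) :=
      mul_le_mul_of_nonneg_right (by linarith) (by linarith)
    rw [hcoe0]
    nlinarith [hps, hxij]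
  · -- the U_{k+1} estimates
    intro k hk1 hk2
    have hUne : (hierU ta r k).Nonempty := ⟨r, root_mem_hierU ta r k⟩
    have hWne : (hierU ta r (k + 1)).Nonempty := ⟨r, root_mem_hierU ta r (k + 1)⟩
    have hUW : hierU ta r k ⊆ hierU ta r (k + 1) := hierU_succ ta r k
    have hα0 : 0 ≤ hierAlpha ta r k := hierAlpha_nonneg ta hta r k
    have hmα : 0 ≤ (m : ℝ) - hierAlpha ta r k := by
      have h1 := ((hhyp s hsmem).2 k hk1 hk2 r (root_mem_hierU ta r (k + 1))).2
      have h2 : (0 : ℝ) ≤ ∑ l ∈ (hierU ta r k)ᶜ, a s r l :=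
        Finset.sum_nonneg fun l _ => ha_nonneg s r l
      linarith
    refine diniUpper_sdiam_le v (fun i => ∑ j, a s i j • (v s j - v s i)) s
      (fun i => htraj i s hsmem) (hierU ta r (k + 1)) hWne _ ?_
    intro i hi j hj _ e he1 heD
    beta_reduce
    rw [inner_deriv_expand e (v s) (a s i) (a s j) i j]
    have hxij : ⟪e, v s i⟫ - ⟪e, v s j⟫ = sdiam ↑(hierU ta r (k + 1)) (v s) := by
      rw [← inner_sub_right]; exact heD
    have hsplit1 : ∑ l, a s i l * (⟪e, v s l⟫ - ⟪e, v s i⟫)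
        = (∑ l ∈ hierU ta r k, a s i l * (⟪e, v s l⟫ - ⟪e, v s i⟫))
          + ∑ l ∈ (hierU ta r k)ᶜ, a s i l * (⟪e, v s l⟫ - ⟪e, v s i⟫) :=
      (Finset.sum_add_sum_compl _ _).symm
    have hsplit2 : ∑ l, a s j l * (⟪e, v s j⟫ - ⟪e, v s l⟫)
        = (∑ l ∈ hierU ta r k, a s j l * (⟪e, v s j⟫ - ⟪e, v s l⟫))
          + ∑ l ∈ (hierU ta r k)ᶜ, a s j l * (⟪e, v s j⟫ - ⟪e, v s l⟫) :=
      (Finset.sum_add_sum_compl _ _).symm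
    rw [hsplit1, hsplit2]
    have hin := pair_sum_le_nonpos (hierU ta r k) hUne (a s i) (a s j)
      (fun l => ⟪e, v s l⟫) i j (hierAlpha ta r k) (sdiam ↑(hierU ta r k) (v s))
      (fun l _ => ha_nonneg s i l) (fun l _ => ha_nonneg s j l)
      ((hhyp s hsmem).2 k hk1 hk2 i hi).1 ((hhyp s hsmem).2 k hk1 hk2 j hj).1 hα0
      (fun l hl => by
        show ⟪e, v s l⟫ ≤ ⟪e, v s i⟫
        have h1 := inner_diff_le_sdiam he1 (v s) (hUW hl) hj
        linarith)
      (fun l hl => by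
        show ⟪e, v s j⟫ ≤ ⟪e, v s l⟫
        have h1 := inner_diff_le_sdiam he1 (v s) hi (hUW hl)
        linarith)
      (fun l hl l' hl' => inner_diff_le_sdiam he1 (v s) hl hl')
    beta_reduce at hin
    have hout := pair_sum_le ((hierU ta r k)ᶜ) (a s i) (a s j)
      (fun l => ⟪e, v s l⟫) i j ((m : ℝ) - hierAlpha ta r k)
      (sdiam ↑(Finset.univ : Finset (Fin n)) (v s))
      (fun l _ => ha_nonneg s i l) (fun l _ => ha_nonneg s j l)
      ((hhyp s hsmem).2 k hk1 hk2 i hi).2 ((hhyp s hsmem).2 k hk1 hk2 j hj).2 hmα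
      (fun l l' => inner_diff_le_sdiam he1 (v s) (Finset.mem_univ l) (Finset.mem_univ l'))
    beta_reduce at hout
    rw [hxij] at hin hout
    have e2 : ((m : ℝ) - hierAlpha ta r k) * (sdiam ↑(Finset.univ : Finset (Fin n)) (v s)
          - sdiam ↑(hierU ta r (k + 1)) (v s))
        ≤ ((m : ℝ) - hierAlpha ta r k) * (sdiam ↑(Finset.univ : Finset (Fin n)) (v t0)
          - sdiam ↑(hierU ta r (k + 1)) (v s)) :=
      mul_le_mul_of_nonneg_left (by linarith) hmα
    rw [hcoe0]
    linarith
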